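/- The set m₂ := {(a, b, c) ∈ W : a is even} is an ideal of W; it is a maximal ideal, the quotient ring W/m₂ has exactly two elements (so W/m₂ ≅ 𝔽₂), and m₂ is the unique maximal ideal of W containing the element 2 = (2, 2, 2); consequently m₂ is the unique maximal ideal of W of residue characteristic 2. -/

import Mathlib

abbrev Rng : Type := ℤ × Zsqrtd 2 × Zsqrtd 3

def Wset : Set Rng :=
  {p | p.1 ≡ p.2.1.re [ZMOD 2] ∧ p.1 ≡ p.2.2.re + p.2.2.im [ZMOD 2] ∧
       p.2.1.im ≡ p.2.2.im [ZMOD 2]}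

private lemma modeq_iff (a b : ℤ) : a ≡ b [ZMOD 2] ↔ ((a : ZMod 2) = b) :=
  (ZMod.intCast_eq_intCast_iff a b 2).symm

def W : Subring Rng where
  carrier := Wset
  zero_mem' := by refine ⟨?_, ?_, ?_⟩ <;> decide
  one_mem' := by refine ⟨?_, ?_, ?_⟩ <;> decide
  add_mem' := by
    rintro a b ⟨h1, h2, h3⟩ ⟨g1, g2, g3⟩
    refine ⟨h1.add g1, ?_, h3.add g3⟩
    simpa [add_add_add_comm] using h2.add g2
  neg_mem' := by
    rintro a ⟨h1, h2, h3⟩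
    refine ⟨h1.neg, ?_, h3.neg⟩
    have := h2.neg
    simp only [Wset, Set.mem_setOf_eq, Prod.fst_neg, Prod.snd_neg, Zsqrtd.re_neg,
      Zsqrtd.im_neg, Int.modEq_iff_dvd] at this ⊢
    omega
  mul_mem' := by
    rintro a b ⟨h1, h2, h3⟩ ⟨g1, g2, g3⟩
    simp only [Wset, Set.mem_setOf_eq, Prod.fst_mul, Prod.snd_mul, Zsqrtd.re_mul,
      Zsqrtd.im_mul, modeq_iff] at h1 h2 h3 g1 g2 g3 ⊢
    push_cast at h1 h2 h3 g1 g2 g3 ⊢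
    have h0 : (2 : ZMod 2) = 0 := rfl
    refine ⟨?_, ?_, ?_⟩
    · rw [← h1, ← g1, h0]; ring
    · linear_combination (b.1 : ZMod 2) * h2 + ((a.2.2.re : ZMod 2) + a.2.2.im) * g2 -
        ((a.2.2.im : ZMod 2) * b.2.2.im) * h0
    · linear_combination (b.2.1.im : ZMod 2) * h2 - (b.2.1.im : ZMod 2) * h1
        + (b.2.1.re : ZMod 2) * h3 + ((a.2.2.re : ZMod 2) + a.2.2.im) * g3
        + (a.2.2.im : ZMod 2) * g2 - (a.2.2.im : ZMod 2) * g1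
        + ((a.2.2.im : ZMod 2) * b.2.2.im) * h0

lemma mem_W_iff (x : Rng) : x ∈ W ↔ x ∈ Wset := Iff.rfl

/-- The ideal `m₂ = {(a, b, c) ∈ W : a is even}` of `W`. -/
def m2 : Ideal W where
  carrier := {x | Even ((x : Rng).1)}
  zero_mem' := Even.zero
  add_mem' := fun hx hy => hx.add hy
  smul_mem' := fun c x hx => hx.mul_left ((c : Rng).1)

private def f : W →+* ZMod 2 where
  toFun x := (((x : Rng).1 : ℤ) : ZMod 2)
  map_one' := by norm_num
  map_mul' x y := by
    show ((((x * y : W) : Rng).1 : ℤ) : ZMod 2) = _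
    have h : ((x * y : W) : Rng).1 = (x : Rng).1 * (y : Rng).1 := rfl
    rw [h]; push_cast; ring
  map_zero' := by norm_num
  map_add' x y := by
    show ((((x + y : W) : Rng).1 : ℤ) : ZMod 2) = _
    have h : ((x + y : W) : Rng).1 = (x : Rng).1 + (y : Rng).1 := rfl
    rw [h]; push_cast; ring

private lemma ker_f : RingHom.ker f = m2 := by
  ext x
  simp only [RingHom.mem_ker, f, RingHom.coe_mk, MonoidHom.coe_mk, OneHom.coe_mk]
  rw [ZMod.intCast_zmod_eq_zero_iff_dvd]
  exact ⟨fun h => even_iff_two_dvd.mpr h, fun h => even_iff_two_dvd.mp h⟩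

private lemma f_surj : Function.Surjective f := by
  intro z
  fin_cases z
  · exact ⟨0, map_zero f⟩
  · exact ⟨1, map_one f⟩

private lemma key (x : W) (hx : x ∈ m2) : ∃ y : W, x ^ 4 = 2 * y := by
  obtain ⟨⟨a, ⟨br, bi⟩, ⟨cr, ci⟩⟩, hW⟩ := x
  obtain ⟨h1, h2, h3⟩ := hW
  obtain ⟨a1, ha⟩ := hx
  obtain ⟨s, hs⟩ := h1.dvd
  obtain ⟨t, ht⟩ := h2.dvd
  obtain ⟨u, hu⟩ := h3.dvd
  simp only at ha hs ht hu
  have ha2 : a = 2 * a1 := by omega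
  have hbr : br = 2 * (a1 + s) := by omega
  have hcr : cr = 2 * (a1 + t) - ci := by omega
  have hbi : bi = ci - 2 * u := by omega
  subst ha2 hbr hcr hbi
  set B := a1 + s with hB
  set M := a1 + t with hM
  set bi := ci - 2 * u with hbi2
  set Q := M ^ 2 - M * ci + ci ^ 2 with hQ
  set cr := 2 * M - ci with hcr2
  refine ⟨⟨(2 * (4 * a1 ^ 4),
      ⟨2 * ((2 * B ^ 2 + bi ^ 2) ^ 2 + 8 * B ^ 2 * bi ^ 2), 2 * (4 * (2 * B ^ 2 + bi ^ 2) * B * bi)⟩,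
      ⟨2 * (4 * Q ^ 2 + 3 * cr ^ 2 * ci ^ 2), 2 * (4 * Q * cr * ci)⟩), ?_, ?_, ?_⟩, ?_⟩
  · exact (Int.modEq_zero_iff_dvd.mpr ⟨_, rfl⟩).trans (Int.modEq_zero_iff_dvd.mpr ⟨_, rfl⟩).symm
  · exact (Int.modEq_zero_iff_dvd.mpr ⟨_, rfl⟩).trans
      (Int.modEq_zero_iff_dvd.mpr ⟨4 * Q ^ 2 + 3 * cr ^ 2 * ci ^ 2 + 4 * Q * cr * ci, by ring⟩).symm
  · exact (Int.modEq_zero_iff_dvd.mpr ⟨_, rfl⟩).trans (Int.modEq_zero_iff_dvd.mpr ⟨_, rfl⟩).symm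
  · apply Subtype.ext
    show ((2 * a1, (⟨2 * B, bi⟩ : Zsqrtd 2), (⟨cr, ci⟩ : Zsqrtd 3)) : Rng) ^ 4 = _
    refine Prod.ext ?_ (Prod.ext ?_ ?_)
    · show (2 * a1) ^ 4 = 2 * (2 * (4 * a1 ^ 4))
      ring
    · show (⟨2 * B, bi⟩ : Zsqrtd 2) ^ 4 = 2 * _
      ext <;> simp [pow_succ, Zsqrtd.re_mul, Zsqrtd.im_mul] <;> ring
    · show (⟨cr, ci⟩ : Zsqrtd 3) ^ 4 = 2 * _
      ext <;> simp [pow_succ, Zsqrtd.re_mul, Zsqrtd.im_mul, hQ, hcr2] <;> ring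

/-- `m₂ = {(a,b,c) ∈ W : a even}` is an ideal of `W` (witnessed by the definition `m2`
above); it is maximal, the quotient `W/m₂` has exactly two elements, and `m₂` is the
unique maximal ideal of `W` containing `2 = (2,2,2)`; consequently it is the unique
maximal ideal of `W` of residue characteristic `2`. -/
theorem stmt6 :
    m2.IsMaximal ∧ Nat.card (W ⧸ m2) = 2 ∧
    (∀ m : Ideal W, m.IsMaximal → (2 : W) ∈ m → m = m2) ∧
    (∀ m : Ideal W, m.IsMaximal → ringChar (W ⧸ m) = 2 → m = m2) := by
  have hmax : m2.IsMaximal := by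
    rw [← ker_f]
    exact RingHom.ker_isMaximal_of_surjective f f_surj
  have e : (W ⧸ m2) ≃+* ZMod 2 := by
    rw [← ker_f]
    exact RingHom.quotientKerEquivOfSurjective f_surj
  have huniq : ∀ m : Ideal W, m.IsMaximal → (2 : W) ∈ m → m = m2 := by
    intro m hm h2m
    have hle : m2 ≤ m := by
      intro x hx
      obtain ⟨y, hy⟩ := key x hx
      have hp : x ^ 4 ∈ m := hy ▸ Ideal.mul_mem_right _ _ h2m
      exact hm.isPrime.mem_of_pow_mem 4 hp
    exact (hmax.eq_of_le hm.ne_top hle).symm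
  refine ⟨hmax, ?_, huniq, ?_⟩
  · rw [Nat.card_congr e.toEquiv]
    simp [Nat.card_eq_fintype_card]
  · intro m hm hchar
    apply huniq m hm
    have h0 : ((2 : ℕ) : W ⧸ m) = 0 := by rw [← hchar]; exact ringChar.Nat.cast_ringChar
    rw [← Ideal.Quotient.eq_zero_iff_mem]
    have h1 : (Ideal.Quotient.mk m) (2 : W) = ((2 : ℕ) : W ⧸ m) := by push_cast; rfl
    rw [h1, h0]
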